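/- Let A be an n×n real positive definite matrix with SVD A = UΛUᵀ, where U = [u_1,…,u_n] is orthogonal and Λ = diag(λ_1,…,λ_n) with all λ_i > 0. Let ΔU = [Δu_i] be such that U + ΔU is orthogonal and ⟨u_i, u_i + Δu_i⟩ ≥ 1 − β ≥ 0 for all i. Let s ∈ ℝ, B := (UΛUᵀ)^s, and ΔB := ((U+ΔU)Λ(U+ΔU)ᵀ)^s − B. Then ⟨B, ΔB⟩ ≥ ((1−β)² − 1)·‖B‖_F². -/

import Mathlib

open Matrix

/-- Frobenius norm of a real matrix. -/
noncomputable def frobNorm {m n : Type*} [Fintype m] [Fintype n] (A : Matrix m n ℝ) : ℝ :=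
  Real.sqrt (∑ i, ∑ j, (A i j) ^ 2)

/-- Frobenius inner product `⟨A, B⟩ = tr(AᵀB)`. -/
noncomputable def frobInner {m n : Type*} [Fintype m] [Fintype n] (A B : Matrix m n ℝ) : ℝ :=
  (Aᵀ * B).trace

lemma trace_diag_conj {n : ℕ} (d : Fin n → ℝ) (M : Matrix (Fin n) (Fin n) ℝ) :
    (Matrix.diagonal d * M * Matrix.diagonal d * Mᵀ).trace
      = ∑ i, ∑ j, d i * d j * (M i j) ^ 2 := by
  have h1 : ∀ i j, (Matrix.diagonal d * M * Matrix.diagonal d) i j = d i * M i j * d j := by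
    intro i j; rw [Matrix.mul_diagonal, Matrix.diagonal_mul]
  simp only [Matrix.trace, Matrix.diag, Matrix.mul_apply, Matrix.transpose_apply, h1]
  apply Finset.sum_congr rfl; intro i _
  apply Finset.sum_congr rfl; intro j _
  ring

theorem frobInner_perturbation_lower_bound
    {n : ℕ} (A U ΔU : Matrix (Fin n) (Fin n) ℝ) (lam : Fin n → ℝ)
    (hA : A = U * Matrix.diagonal lam * Uᵀ)
    (hApd : A.PosDef)
    (hlam : ∀ i, 0 < lam i)
    (hU : Uᵀ * U = 1)
    (hU' : (U + ΔU)ᵀ * (U + ΔU) = 1)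
    (s β : ℝ)
    (hβ : ∀ i, 1 - β ≤ ∑ j, U j i * (U j i + ΔU j i))
    (hβ0 : 0 ≤ 1 - β)
    (B ΔB : Matrix (Fin n) (Fin n) ℝ)
    (hB : B = U * Matrix.diagonal (fun i => lam i ^ s) * Uᵀ)
    (hΔB : ΔB = (U + ΔU) * Matrix.diagonal (fun i => lam i ^ s) * (U + ΔU)ᵀ - B) :
    ((1 - β) ^ 2 - 1) * (frobNorm B) ^ 2 ≤ frobInner B ΔB := by
  set d : Fin n → ℝ := fun i => lam i ^ s with hd
  have hdpos : ∀ i, 0 < d i := fun i => Real.rpow_pos_of_pos (hlam i) s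
  set V : Matrix (Fin n) (Fin n) ℝ := U + ΔU with hV
  set W : Matrix (Fin n) (Fin n) ℝ := Uᵀ * V with hW
  have hBsymm : Bᵀ = B := by
    rw [hB]; simp [Matrix.transpose_mul, Matrix.mul_assoc]
  -- ‖B‖² = ∑ d i ^ 2
  have hBB : (Bᵀ * B).trace = ∑ i, d i ^ 2 := by
    rw [hBsymm, hB]
    have h2 : Matrix.diagonal d * (Matrix.diagonal d * Uᵀ)
        = Matrix.diagonal (fun i => d i * d i) * Uᵀ := by
      rw [← Matrix.mul_assoc, Matrix.diagonal_mul_diagonal]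
    have h3 : (U * Matrix.diagonal d * Uᵀ) * (U * Matrix.diagonal d * Uᵀ)
        = U * Matrix.diagonal (fun i => d i * d i) * Uᵀ := by
      calc (U * Matrix.diagonal d * Uᵀ) * (U * Matrix.diagonal d * Uᵀ)
          = U * (Matrix.diagonal d * ((Uᵀ * U) * (Matrix.diagonal d * Uᵀ))) := by
            simp only [Matrix.mul_assoc]
        _ = U * (Matrix.diagonal (fun i => d i * d i) * Uᵀ) := by
            rw [hU, Matrix.one_mul, h2]
        _ = U * Matrix.diagonal (fun i => d i * d i) * Uᵀ := by
            rw [Matrix.mul_assoc]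
    rw [h3, Matrix.trace_mul_cycle, hU, Matrix.one_mul, Matrix.trace_diagonal]
    simp [pow_two]
  have hnorm : (frobNorm B) ^ 2 = ∑ i, d i ^ 2 := by
    rw [frobNorm, Real.sq_sqrt (by positivity)]
    rw [← hBB]
    simp only [Matrix.trace, Matrix.diag, Matrix.mul_apply, Matrix.transpose_apply]
    rw [Finset.sum_comm]
    simp [pow_two]
  -- ⟨B, B'⟩ = ∑ i j, d i * d j * W i j ^ 2
  have hcross : (Bᵀ * (V * Matrix.diagonal d * Vᵀ)).trace
      = ∑ i, ∑ j, d i * d j * (W i j) ^ 2 := by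
    rw [hBsymm, hB, ← trace_diag_conj d W]
    have : U * Matrix.diagonal d * Uᵀ * (V * Matrix.diagonal d * Vᵀ)
        = U * (Matrix.diagonal d * W * Matrix.diagonal d * Wᵀ) * Uᵀ := by
      rw [hW]
      simp only [Matrix.transpose_mul, Matrix.transpose_transpose, Matrix.mul_assoc,
        mul_eq_one_comm.mp hU, Matrix.mul_one]
    rw [this, Matrix.trace_mul_cycle, ← Matrix.mul_assoc, hU, Matrix.one_mul]
  -- bound
  have hWdiag : ∀ i, (1 - β) ≤ W i i := by
    intro i
    have := hβ i
    simpa [hW, hV, Matrix.mul_apply] using this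
  have key : (1 - β) ^ 2 * (∑ i, d i ^ 2) ≤ ∑ i, ∑ j, d i * d j * (W i j) ^ 2 := by
    calc (1 - β) ^ 2 * (∑ i, d i ^ 2) = ∑ i, d i ^ 2 * (1 - β) ^ 2 := by
          rw [Finset.mul_sum]; exact Finset.sum_congr rfl fun i _ => by ring
      _ ≤ ∑ i, d i * d i * (W i i) ^ 2 := by
          apply Finset.sum_le_sum; intro i _
          rw [pow_two (d i)]
          have : (1 - β) ^ 2 ≤ (W i i) ^ 2 := by
            apply pow_le_pow_left₀ hβ0 (hWdiag i)
          nlinarith [sq_nonneg (d i), (hdpos i).le, mul_pos (hdpos i) (hdpos i)]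
      _ ≤ ∑ i, ∑ j, d i * d j * (W i j) ^ 2 := by
          apply Finset.sum_le_sum; intro i _
          have : d i * d i * (W i i) ^ 2 = ∑ j ∈ {i}, d i * d j * (W i j) ^ 2 := by simp
          rw [this]
          apply Finset.sum_le_sum_of_subset_of_nonneg (Finset.subset_univ _)
          intro j _ _
          exact mul_nonneg (mul_nonneg (hdpos i).le (hdpos j).le) (sq_nonneg _)
  have hfi : frobInner B ΔB = (∑ i, ∑ j, d i * d j * (W i j) ^ 2) - ∑ i, d i ^ 2 := by
    rw [frobInner, hΔB, Matrix.mul_sub, Matrix.trace_sub, hBB, ← hcross]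
  rw [hfi, hnorm]
  nlinarith [key]
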